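/- The function f₁(γ) = ηγ/(δ(δ+γ)) − σ²/(η + √(η² + 2σ²(δ+γ))) is strictly increasing on (0,∞), satisfies lim_{γ↓0} f₁(γ) = 1/θ₋, and lim_{γ↑∞} f₁(γ) = η/δ. -/
import Mathlib


open Real Filter Set

/-- Negative root θ₋ of (σ²/2)r² + ηr − δ = 0. -/
noncomputable def thetaM (σ η δ : ℝ) : ℝ := (-η - Real.sqrt (η ^ 2 + 2 * σ ^ 2 * δ)) / σ ^ 2

/-- f₁(γ) = ηγ/(δ(δ+γ)) − σ²/(η + √(η² + 2σ²(δ+γ))). -/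
noncomputable def f1 (σ η δ : ℝ) (γ : ℝ) : ℝ :=
  η * γ / (δ * (δ + γ)) - σ ^ 2 / (η + Real.sqrt (η ^ 2 + 2 * σ ^ 2 * (δ + γ)))

theorem f1_strictMonoOn_and_limits (σ η δ : ℝ) (hσ : 0 < σ) (hη : 0 < η) (hδ : 0 < δ) :
    StrictMonoOn (f1 σ η δ) (Set.Ioi 0) ∧
    Tendsto (f1 σ η δ) (nhdsWithin 0 (Set.Ioi 0)) (nhds (1 / thetaM σ η δ)) ∧
    Tendsto (f1 σ η δ) atTop (nhds (η / δ)) := by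
  have hσ2 : (0:ℝ) < σ ^ 2 := by positivity
  have hD : ∀ γ : ℝ, 0 < η + Real.sqrt (η ^ 2 + 2 * σ ^ 2 * (δ + γ)) := by
    intro γ
    have := Real.sqrt_nonneg (η ^ 2 + 2 * σ ^ 2 * (δ + γ))
    linarith
  refine ⟨?_, ?_, ?_⟩
  · intro x hx y hy hxy
    simp only [Set.mem_Ioi] at hx hy
    unfold f1
    have hA : η * x / (δ * (δ + x)) < η * y / (δ * (δ + y)) := by
      rw [div_lt_div_iff₀ (by positivity) (by positivity)]
      nlinarith [mul_pos (mul_pos hη hδ) hδ]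
    have hsq : Real.sqrt (η ^ 2 + 2 * σ ^ 2 * (δ + x)) <
        Real.sqrt (η ^ 2 + 2 * σ ^ 2 * (δ + y)) := by
      apply Real.sqrt_lt_sqrt (by positivity)
      nlinarith
    have hB : σ ^ 2 / (η + Real.sqrt (η ^ 2 + 2 * σ ^ 2 * (δ + y))) <
        σ ^ 2 / (η + Real.sqrt (η ^ 2 + 2 * σ ^ 2 * (δ + x))) := by
      apply div_lt_div_of_pos_left hσ2 (hD x)
      linarith
    linarith
  · have hcont : ContinuousAt (f1 σ η δ) 0 := by
      unfold f1
      apply ContinuousAt.sub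
      · exact ContinuousAt.div (by fun_prop) (by fun_prop) (by positivity)
      · exact ContinuousAt.div continuousAt_const
          (continuousAt_const.add ((Real.continuous_sqrt.continuousAt).comp (by fun_prop)))
          (hD 0).ne'
    have h0 : f1 σ η δ 0 = 1 / thetaM σ η δ := by
      unfold f1 thetaM
      rw [one_div_div,
        show -η - Real.sqrt (η ^ 2 + 2 * σ ^ 2 * δ) =
          -(η + Real.sqrt (η ^ 2 + 2 * σ ^ 2 * δ)) by ring, div_neg]
      simp
    rw [← h0]
    exact hcont.tendsto.mono_left nhdsWithin_le_nhds
  · have hEq : ∀ᶠ γ in atTop,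
        η / δ - η / (δ + γ) - σ ^ 2 / (η + Real.sqrt (η ^ 2 + 2 * σ ^ 2 * (δ + γ)))
          = f1 σ η δ γ := by
      filter_upwards [eventually_gt_atTop 0] with γ hγ
      unfold f1
      have h1 : δ + γ ≠ 0 := by positivity
      field_simp [(hD γ).ne']
      ring
    have l1 : Tendsto (fun γ : ℝ => η / (δ + γ)) atTop (nhds 0) :=
      Tendsto.div_atTop tendsto_const_nhds (tendsto_atTop_add_const_left _ _ tendsto_id)
    have l2 : Tendsto (fun γ : ℝ => σ ^ 2 / (η + Real.sqrt (η ^ 2 + 2 * σ ^ 2 * (δ + γ))))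
        atTop (nhds 0) := by
      apply Tendsto.div_atTop tendsto_const_nhds
      apply tendsto_atTop_add_const_left
      have hsq : Tendsto Real.sqrt atTop atTop := by
        apply tendsto_atTop_atTop.mpr
        intro b
        refine ⟨(max b 0) ^ 2, fun a ha => ?_⟩
        calc b ≤ max b 0 := le_max_left _ _
        _ = Real.sqrt ((max b 0) ^ 2) := (Real.sqrt_sq (le_max_right _ _)).symm
        _ ≤ Real.sqrt a := Real.sqrt_le_sqrt ha
      exact hsq.comp
        (tendsto_atTop_add_const_left _ _
          ((tendsto_atTop_add_const_left _ _ tendsto_id).const_mul_atTop (by positivity)))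
    have l0 : Tendsto (fun _ : ℝ => η / δ) atTop (nhds (η / δ)) := tendsto_const_nhds
    have := (l0.sub l1).sub l2
    simp only [sub_zero] at this
    exact this.congr' hEq
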